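/- Let 0 < ε0 < ε1 < π/2 and let z, μ be complex numbers with z ≠ 0, |arg(z)| < ε0, and μ = 0 or |arg(μ)| < π − ε1, with z + μ ≠ 0. Then cos((arg(z) − arg(μ))/2) ≥ sin((ε1 − ε0)/2) > 0 (interpreting arg(0) = 0), and consequently |z + μ| ≥ |z| · sin((ε1 − ε0)/2). -/

import Mathlib

open Complex Real

lemma mul_mul_cos_arg_sub (z μ : ℂ) (hz : z ≠ 0) :
    ‖z‖ * ‖μ‖ * Real.cos (Complex.arg z - Complex.arg μ) =
      z.re * μ.re + z.im * μ.im := by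
  rcases eq_or_ne μ 0 with rfl | hμ
  · simp
  · rw [Real.cos_sub, Complex.cos_arg hz, Complex.cos_arg hμ, Complex.sin_arg, Complex.sin_arg]
    have haz : ‖z‖ ≠ 0 := norm_ne_zero_iff.mpr hz
    have haμ : ‖μ‖ ≠ 0 := norm_ne_zero_iff.mpr hμ
    field_simp

set_option maxHeartbeats 800000 in
theorem cos_half_arg_sub_ge (ε₀ ε₁ : ℝ) (h₀ : 0 < ε₀) (h₀₁ : ε₀ < ε₁)
    (h₁ : ε₁ < Real.pi / 2) (z μ : ℂ) (hz : z ≠ 0) (hargz : |Complex.arg z| < ε₀)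
    (hμ : μ = 0 ∨ |Complex.arg μ| < Real.pi - ε₁) (hzμ : z + μ ≠ 0) :
    Real.cos ((Complex.arg z - Complex.arg μ) / 2) ≥ Real.sin ((ε₁ - ε₀) / 2) ∧
      Real.sin ((ε₁ - ε₀) / 2) > 0 ∧
      ‖z + μ‖ ≥ ‖z‖ * Real.sin ((ε₁ - ε₀) / 2) := by
  have hπ := Real.pi_pos
  have hμ' : |Complex.arg μ| < Real.pi - ε₁ := by
    rcases hμ with rfl | h
    · simp; linarith
    · exact h
  have hbound : |Complex.arg z - Complex.arg μ| < Real.pi - (ε₁ - ε₀) := by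
    calc |Complex.arg z - Complex.arg μ| ≤ |Complex.arg z| + |Complex.arg μ| := abs_sub _ _
      _ < ε₀ + (Real.pi - ε₁) := by linarith
      _ = Real.pi - (ε₁ - ε₀) := by ring
  set θ : ℝ := (Complex.arg z - Complex.arg μ) / 2 with hθ
  have hθbound : |θ| < Real.pi / 2 - (ε₁ - ε₀) / 2 := by
    rw [hθ, abs_div]
    have h2 : |(2:ℝ)| = 2 := abs_two
    rw [h2]
    linarith [hbound]
  have hsin : Real.sin ((ε₁ - ε₀) / 2) > 0 := by
    apply Real.sin_pos_of_pos_of_lt_pi <;> linarith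
  have hcos : Real.cos θ ≥ Real.sin ((ε₁ - ε₀) / 2) := by
    have h1 : Real.cos (Real.pi / 2 - (ε₁ - ε₀) / 2) ≤ Real.cos |θ| := by
      apply Real.cos_le_cos_of_nonneg_of_le_pi (abs_nonneg _) (by linarith) (le_of_lt hθbound)
    rw [Real.cos_pi_div_two_sub, Real.cos_abs] at h1
    exact h1
  refine ⟨hcos, hsin, ?_⟩
  set a := ‖z‖ with ha
  set b := ‖μ‖ with hb
  set s := Real.sin ((ε₁ - ε₀) / 2) with hs
  have ha0 : 0 < a := norm_pos_iff.mpr hz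
  have hb0 : 0 ≤ b := norm_nonneg μ
  have hkey : a * b * Real.cos (Complex.arg z - Complex.arg μ) = z.re * μ.re + z.im * μ.im :=
    mul_mul_cos_arg_sub z μ hz
  have hdbl : Real.cos (Complex.arg z - Complex.arg μ) = 2 * Real.cos θ ^ 2 - 1 := by
    have : Complex.arg z - Complex.arg μ = 2 * θ := by rw [hθ]; ring
    rw [this, Real.cos_two_mul]
  have hsq : ‖z + μ‖ ^ 2 = a ^ 2 + b ^ 2 + 2 * (z.re * μ.re + z.im * μ.im) := by
    rw [ha, hb, Complex.sq_norm, Complex.sq_norm, Complex.sq_norm]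
    simp only [Complex.normSq_apply, Complex.add_re, Complex.add_im]
    ring
  have hc1 : Real.cos θ ^ 2 ≤ 1 := Real.cos_sq_le_one θ
  have hs1 : s ≤ Real.cos θ := hcos
  have habs : 0 ≤ ‖z + μ‖ := norm_nonneg _
  have hsqge : ‖z + μ‖ ^ 2 ≥ (a * s) ^ 2 := by
    have h2 : ‖z + μ‖ ^ 2 ≥ (a + b) ^ 2 * Real.cos θ ^ 2 := by
      rw [hsq, ← hkey, hdbl]
      nlinarith [sq_nonneg (a - b), sq_nonneg ((a - b) * Real.cos θ)]
    have h3 : (a + b) ^ 2 * Real.cos θ ^ 2 ≥ (a * s) ^ 2 := by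
      have hsnn : 0 ≤ s := le_of_lt hsin
      have hcnn : 0 ≤ Real.cos θ := le_trans hsnn hs1
      have : a * s ≤ (a + b) * Real.cos θ := by nlinarith
      nlinarith [mul_nonneg ha0.le hsnn]
    linarith
  nlinarith [mul_nonneg (mul_nonneg ha0.le hsin.le) habs]
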